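/- Let Λ be a coherent frame. Then Λ has enough points in the following sense: for all a, b ∈ Λ with ¬ b ≤ a there exists a prime element p of Λ with a ≤ p and ¬ b ≤ p. Consequently, if a, b ∈ Λ satisfy (for every prime element p, a ≤ p if and only if b ≤ p), then a = b. -/
import Mathlib


open CompleteLattice

/-- An element `p` of a lattice with top is prime if `p ≠ ⊤` and
`x ⊓ y ≤ p` implies `x ≤ p` or `y ≤ p`. -/
def IsPrimeElem {Λ : Type*} [Lattice Λ] [OrderTop Λ] (p : Λ) : Prop :=
  p ≠ ⊤ ∧ ∀ x y : Λ, x ⊓ y ≤ p → x ≤ p ∨ y ≤ p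

theorem stmt3 {Λ : Type*} [Order.Frame Λ] [IsCompactlyGenerated Λ]
    (htop : IsCompactElement (⊤ : Λ))
    (hinf : ∀ a b : Λ, IsCompactElement a → IsCompactElement b → IsCompactElement (a ⊓ b)) :
    (∀ a b : Λ, ¬ b ≤ a → ∃ p, IsPrimeElem p ∧ a ≤ p ∧ ¬ b ≤ p) ∧
    (∀ a b : Λ, (∀ p : Λ, IsPrimeElem p → (a ≤ p ↔ b ≤ p)) → a = b) := by
  have main : ∀ a b : Λ, ¬ b ≤ a → ∃ p, IsPrimeElem p ∧ a ≤ p ∧ ¬ b ≤ p := by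
    intro a b hba
    -- find a compact c ≤ b with ¬ c ≤ a
    obtain ⟨c, hc, hcb, hca⟩ : ∃ c : Λ, IsCompactElement c ∧ c ≤ b ∧ ¬ c ≤ a := by
      by_contra h
      push_neg at h
      apply hba
      obtain ⟨s, hs, hsup⟩ := IsCompactlyGenerated.exists_sSup_eq b
      rw [← hsup]
      exact _root_.sSup_le fun x hx => h x (hs x hx) (hsup ▸ le_sSup hx)
    set S : Set Λ := {x | a ≤ x ∧ ¬ c ≤ x} with hS
    have haS : a ∈ S := ⟨le_rfl, hca⟩
    obtain ⟨p, hap, hpS, hmax⟩ : ∃ p, a ≤ p ∧ p ∈ S ∧ ∀ z ∈ S, p ≤ z → z ≤ p := by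
      obtain ⟨m, ham, hm⟩ := zorn_le_nonempty₀ S (fun C hCS hC y hyC => by
        refine ⟨sSup C, ⟨(hCS hyC).1.trans (le_sSup hyC), fun hcs => ?_⟩,
          fun z hz => le_sSup hz⟩
        obtain ⟨x, hxC, hcx⟩ := (isCompactElement_iff_le_of_directed_sSup_le Λ c).mp hc C
          ⟨y, hyC⟩ (hC.directedOn) hcs
        exact (hCS hxC).2 hcx) a haS
      exact ⟨m, ham, hm.1, fun z hz hmz => hm.2 hz hmz⟩
    refine ⟨p, ⟨?_, ?_⟩, hap, fun hbp => hpS.2 (hcb.trans hbp)⟩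
    · rintro rfl; exact hpS.2 le_top
    · intro x y hxy
      by_contra h
      push_neg at h
      have hx : c ≤ p ⊔ x := by
        by_contra hcx
        exact h.1 (le_sup_right.trans (hmax _ ⟨hap.trans le_sup_left, hcx⟩ le_sup_left))
      have hy : c ≤ p ⊔ y := by
        by_contra hcy
        exact h.2 (le_sup_right.trans (hmax _ ⟨hap.trans le_sup_left, hcy⟩ le_sup_left))
      exact hpS.2 (le_inf hx hy |>.trans (by rw [← sup_inf_left]; exact sup_le le_rfl hxy))
  refine ⟨main, fun a b h => le_antisymm ?_ ?_⟩
  · by_contra hab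
    obtain ⟨p, hp, hbp, hap⟩ := main b a hab
    exact hap ((h p hp).mpr hbp)
  · by_contra hba
    obtain ⟨p, hp, hap, hbp⟩ := main a b hba
    exact hbp ((h p hp).mp hap)
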